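/- arXiv:1109.2200 — 3 statements merged into one kernel-verified Lean document; each statement's English description precedes it below -/
import Mathlib

section
/- Let u, v : M × [0,T) → ℝ with v a continuous viscosity supersolution of ∂ₜ f = L f + c f and u a smooth positive solution of the same linear equation, on a compact manifold M, where L is a (possibly time-dependent) linear second-order elliptic operator with smooth coefficients and c is continuous. Then inf_{x∈M} v(x,t)/u(x,t) is non-decreasing in t. -/
/-- Comparison of a viscosity supersolution with a positive classical solution of a
linear parabolic equation `∂ₜ f = L f + c f` on a compact manifold `M`:
`inf_M v(·,t)/u(·,t)` is non-decreasing in `t`.  Here the (possibly time-dependent)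
second-order elliptic operator `L` and the time derivative `Dt` act on a class `Test`
of `C²` functions on space-time; `L` is linear and commutes with multiplication by
functions of time alone, `Dt` obeys the product rule for such multipliers, `u` is a
smooth (`Test`) positive classical solution, and `v` is a continuous viscosity
supersolution: every `Test` function `φ` touching `v` from below at a point
`(x₀,t₀)` (i.e. `φ = v` there and `φ ≤ v` nearby for `t ≤ t₀`) satisfies
`Dt φ ≥ L φ + c φ` at `(x₀,t₀)`. -/
theorem stmt_6 {M : Type*} [TopologicalSpace M] [CompactSpace M] [Nonempty M]
    (T : ℝ) (hT : 0 < T)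
    (Test : (M × ℝ → ℝ) → Prop)
    (L Dt : (M × ℝ → ℝ) → M × ℝ → ℝ)
    (c : M × ℝ → ℝ) (hc : Continuous c)
    -- structural properties of the operators
    (hL_lin : ∀ (a b : ℝ) (f g : M × ℝ → ℝ), Test f → Test g →
      L (fun p => a * f p + b * g p) = fun p => a * L f p + b * L g p)
    (hTest_mul : ∀ (g : ℝ → ℝ), ContDiff ℝ 1 g →
      ∀ f, Test f → Test (fun p => g p.2 * f p))
    (hDt_mul : ∀ (g : ℝ → ℝ), ContDiff ℝ 1 g → ∀ f, Test f →
      Dt (fun p => g p.2 * f p) = fun p => deriv g p.2 * f p + g p.2 * Dt f p)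
    (hL_mul : ∀ (g : ℝ → ℝ), ContDiff ℝ 1 g → ∀ f, Test f →
      L (fun p => g p.2 * f p) = fun p => g p.2 * L f p)
    -- u is a smooth positive classical solution
    (u : M × ℝ → ℝ) (hu_test : Test u) (hu_cont : Continuous u)
    (hu_pos : ∀ p : M × ℝ, p.2 ∈ Set.Ico (0 : ℝ) T → 0 < u p)
    (hu_sol : ∀ p : M × ℝ, p.2 ∈ Set.Ico (0 : ℝ) T → Dt u p = L u p + c p * u p)
    -- v is a continuous viscosity supersolution
    (v : M × ℝ → ℝ) (hv_cont : Continuous v)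
    (hv_super : ∀ φ, Test φ → ∀ p : M × ℝ, p.2 ∈ Set.Ico (0 : ℝ) T →
      φ p = v p →
      (∀ᶠ q in nhds p, q.2 ≤ p.2 → φ q ≤ v q) →
      L φ p + c p * φ p ≤ Dt φ p) :
    ∀ s t : ℝ, 0 ≤ s → s ≤ t → t < T →
      (⨅ x : M, v (x, s) / u (x, s)) ≤ ⨅ x : M, v (x, t) / u (x, t) := by
  intro s t hs hst htT
  have hsT : s < T := lt_of_le_of_lt hst htT
  have husp : ∀ x : M, 0 < u (x, s) := fun x => hu_pos (x, s) ⟨hs, hsT⟩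
  have hutp : ∀ x : M, 0 < u (x, t) := fun x => hu_pos (x, t) ⟨le_trans hs hst, htT⟩
  set φs := ⨅ x : M, v (x, s) / u (x, s) with hφs
  -- the infimum at time s is a lower bound
  have hbb : BddBelow (Set.range fun x : M => v (x, s) / u (x, s)) := by
    have hcont : Continuous fun x : M => v (x, s) / u (x, s) := by
      apply Continuous.div
      · exact hv_cont.comp (continuous_id.prodMk continuous_const)
      · exact hu_cont.comp (continuous_id.prodMk continuous_const)
      · exact fun x => (husp x).ne'
    exact (isCompact_range hcont).bddBelow
  have hφs_le : ∀ x : M, φs * u (x, s) ≤ v (x, s) := by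
    intro x
    have := ciInf_le hbb x
    rwa [le_div_iff₀ (husp x)] at this
  -- key claim
  have key : ∀ ε : ℝ, 0 < ε → ∀ x : M,
      (φs - ε * Real.exp (t - s)) * u (x, t) ≤ v (x, t) := by
    intro ε hε x
    by_contra hcon
    push_neg at hcon
    set g : ℝ → ℝ := fun r => φs - ε * Real.exp (r - s) with hgdef
    have hg1 : ContDiff ℝ 1 g := by
      apply ContDiff.sub contDiff_const
      exact contDiff_const.mul (Real.contDiff_exp.comp (contDiff_id.sub contDiff_const))
    have hgder : ∀ r : ℝ, HasDerivAt g (-(ε * Real.exp (r - s))) r := by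
      intro r
      have h1 : HasDerivAt (fun r : ℝ => r - s) 1 r := (hasDerivAt_id r).sub_const s
      have h2 : HasDerivAt (fun r : ℝ => Real.exp (r - s)) (Real.exp (r - s) * 1) r :=
        (Real.hasDerivAt_exp (r - s)).comp (h₂ := Real.exp) r h1
      have h3 := (h2.const_mul ε).const_sub φs
      simpa [mul_comm, mul_assoc] using h3
    set h : M × ℝ → ℝ := fun p => v p - g p.2 * u p with hhdef
    have hhcont : Continuous h := by
      apply hv_cont.sub
      exact ((hg1.continuous).comp continuous_snd).mul hu_cont
    -- h is positive at time s
    have h_at_s : ∀ y : M, 0 < h (y, s) := by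
      intro y
      have : g s = φs - ε := by simp [hgdef]
      have h1 := hφs_le y
      have h2 := husp y
      simp only [hhdef, this]
      nlinarith
    -- the set of bad times
    set S : Set ℝ := {r : ℝ | r ∈ Set.Icc s t ∧ ∃ y : M, h (y, r) ≤ 0} with hSdef
    have htS : t ∈ S := by
      refine ⟨⟨hst, le_refl t⟩, x, ?_⟩
      have hgt : g t = φs - ε * Real.exp (t - s) := rfl
      simp only [hhdef, hgt]
      linarith
    -- S is compact
    have hScompact : IsCompact S := by
      have hK : IsCompact {p : M × ℝ | p.2 ∈ Set.Icc s t ∧ h p ≤ 0} := by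
        apply IsCompact.of_isClosed_subset (isCompact_univ.prod isCompact_Icc)
        · exact (isClosed_Icc.preimage continuous_snd).inter
            (isClosed_le hhcont continuous_const)
        · intro p hp; exact ⟨Set.mem_univ _, hp.1⟩
      have himg : S = Prod.snd '' {p : M × ℝ | p.2 ∈ Set.Icc s t ∧ h p ≤ 0} := by
        ext r
        constructor
        · rintro ⟨hr, y, hy⟩; exact ⟨(y, r), ⟨hr, hy⟩, rfl⟩
        · rintro ⟨⟨y, r'⟩, ⟨hr, hy⟩, rfl⟩; exact ⟨hr, y, hy⟩
      rw [himg]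
      exact hK.image continuous_snd
    set t₀ := sInf S with ht₀def
    have ht₀S : t₀ ∈ S := hScompact.sInf_mem ⟨t, htS⟩
    obtain ⟨⟨hst₀, ht₀t⟩, x₀, hx₀⟩ := ht₀S
    -- strictly before t₀, h is positive
    have hpos_lt : ∀ r : ℝ, s ≤ r → r < t₀ → ∀ y : M, 0 < h (y, r) := by
      intro r hr1 hr2 y
      by_contra hy
      push_neg at hy
      have hrS : r ∈ S := ⟨⟨hr1, le_trans hr2.le ht₀t⟩, y, hy⟩
      exact absurd (csInf_le hScompact.bddBelow hrS) (not_le.mpr hr2)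
    -- s < t₀
    have hslt : s < t₀ := by
      rcases lt_or_eq_of_le hst₀ with hlt | heq
      · exact hlt
      · exfalso; have := h_at_s x₀; rw [← heq] at hx₀; linarith
    -- h is nonnegative at time t₀
    have hnn : ∀ y : M, 0 ≤ h (y, t₀) := by
      intro y
      have hcy : Continuous fun r : ℝ => h (y, r) :=
        hhcont.comp (continuous_const.prodMk continuous_id)
      have hne : (nhdsWithin t₀ (Set.Ioo s t₀)).NeBot := by
        rw [← mem_closure_iff_nhdsWithin_neBot, closure_Ioo hslt.ne]
        exact ⟨hslt.le, le_refl _⟩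
      refine ge_of_tendsto (hcy.continuousWithinAt.tendsto (s := Set.Ioo s t₀)) ?_
      filter_upwards [self_mem_nhdsWithin] with r hr
      exact (hpos_lt r hr.1.le hr.2 y).le
    have hx₀eq : h (x₀, t₀) = 0 := le_antisymm hx₀ (hnn x₀)
    -- build the test function ψ
    set ψ : M × ℝ → ℝ := fun p => g p.2 * u p with hψdef
    have hψtest : Test ψ := hTest_mul g hg1 u hu_test
    have hpmem : ((x₀, t₀) : M × ℝ).2 ∈ Set.Ico (0 : ℝ) T :=
      ⟨le_trans hs hst₀, lt_of_le_of_lt ht₀t htT⟩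
    have htouch : ψ (x₀, t₀) = v (x₀, t₀) := by
      have := hx₀eq
      simp only [hhdef] at this
      simp only [hψdef]
      linarith
    have hev : ∀ᶠ q in nhds ((x₀, t₀) : M × ℝ), q.2 ≤ ((x₀, t₀) : M × ℝ).2 → ψ q ≤ v q := by
      have hnhd : {q : M × ℝ | s < q.2} ∈ nhds ((x₀, t₀) : M × ℝ) :=
        (isOpen_Ioi.preimage continuous_snd).mem_nhds hslt
      filter_upwards [hnhd] with q hq hqt
      have hq0 : 0 ≤ h q := by
        rcases lt_or_eq_of_le hqt with hlt | heq
        · have := hpos_lt q.2 (le_of_lt hq) hlt q.1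
          simpa using this.le
        · have := hnn q.1
          rw [← Prod.mk.eta (p := q), heq]
          exact this
      simp only [hhdef] at hq0
      simp only [hψdef]
      linarith
    have hsup := hv_super ψ hψtest (x₀, t₀) hpmem htouch hev
    -- compute the operators on ψ
    have hLψ : L ψ (x₀, t₀) = g t₀ * L u (x₀, t₀) :=
      congrFun (hL_mul g hg1 u hu_test) (x₀, t₀)
    have hDtψ : Dt ψ (x₀, t₀) = deriv g t₀ * u (x₀, t₀) + g t₀ * Dt u (x₀, t₀) :=
      congrFun (hDt_mul g hg1 u hu_test) (x₀, t₀)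
    have hderg : deriv g t₀ = -(ε * Real.exp (t₀ - s)) := (hgder t₀).deriv
    have husol := hu_sol (x₀, t₀) hpmem
    have hψval : ψ (x₀, t₀) = g t₀ * u (x₀, t₀) := rfl
    rw [hLψ, hψval, hDtψ, hderg, husol] at hsup
    have hupos : 0 < u (x₀, t₀) := hu_pos (x₀, t₀) hpmem
    have hexp : 0 < Real.exp (t₀ - s) := Real.exp_pos _
    have hkey : 0 < ε * Real.exp (t₀ - s) * u (x₀, t₀) := by positivity
    nlinarith [hsup, hkey]
  -- conclude
  have step : ∀ ε : ℝ, 0 < ε →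
      φs - ε * Real.exp (t - s) ≤ ⨅ x : M, v (x, t) / u (x, t) := by
    intro ε hε
    refine le_ciInf fun x => ?_
    rw [le_div_iff₀ (hutp x)]
    exact key ε hε x
  refine le_of_forall_pos_le_add fun δ hδ => ?_
  have hpos : 0 < δ / Real.exp (t - s) := div_pos hδ (Real.exp_pos _)
  have h2 := step _ hpos
  rw [div_mul_cancel₀ _ (Real.exp_pos (t - s)).ne'] at h2
  linarith
end

section
/- Let M₁, M₂ be compact hypersurfaces in ℝ^{n+1} with disjoint images realizing minimal distance d > 0 at points p ∈ M₁, q ∈ M₂, with common unit normal w = (p−q)/d at both points (oriented so ν_x = ν_y = w). Then, after identifying tangent spaces via parallel translation along the segment, the second fundamental forms satisfy h^x ≤ h^y as bilinear forms. -/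
open RealInnerProductSpace

private lemma second_deriv_nonneg_of_min {f : ℝ → ℝ} (hf : ContDiff ℝ 2 f)
    (hmin : ∀ t, f 0 ≤ f t) : 0 ≤ deriv (deriv f) 0 := by
  have h2 : (2 : WithTop ℕ∞) = 1 + 1 := by norm_num
  rw [h2] at hf
  obtain ⟨hd1, -, hf'⟩ := contDiff_succ_iff_deriv.mp hf
  have hd2 : Differentiable ℝ (deriv f) := (contDiff_one_iff_deriv.mp hf').1
  have hc2 : Continuous (deriv (deriv f)) := (contDiff_one_iff_deriv.mp hf').2
  have h0 : deriv f 0 = 0 := by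
    exact (IsLocalMin.deriv_eq_zero (Filter.Eventually.of_forall hmin))
  by_contra h
  push_neg at h
  have hev : ∀ᶠ x in nhds (0 : ℝ), deriv (deriv f) x < 0 :=
    (hc2.continuousAt (x := 0)).eventually_lt_const h
  rw [Metric.eventually_nhds_iff] at hev
  obtain ⟨ε, hε, hball⟩ := hev
  set t := ε / 2 with ht
  have htpos : 0 < t := by positivity
  have hmvt1 : ∃ c ∈ Set.Ioo (0 : ℝ) t, deriv f c = (f t - f 0) / (t - 0) :=
    exists_hasDerivAt_eq_slope f (deriv f) htpos (hd1.continuous.continuousOn)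
      (fun x _ => (hd1 x).hasDerivAt)
  obtain ⟨c, hc, hcs⟩ := hmvt1
  have hc0 : 0 ≤ deriv f c := by
    rw [hcs]; apply div_nonneg
    · linarith [hmin t]
    · linarith [hc.1, hc.2]
  have hmvt2 : ∃ ξ ∈ Set.Ioo (0 : ℝ) c, deriv (deriv f) ξ = (deriv f c - deriv f 0) / (c - 0) :=
    exists_hasDerivAt_eq_slope (deriv f) (deriv (deriv f)) hc.1
      (hd2.continuous.continuousOn) (fun x _ => (hd2 x).hasDerivAt)
  obtain ⟨ξ, hξ, hξs⟩ := hmvt2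
  have hξ0 : 0 ≤ deriv (deriv f) ξ := by
    rw [hξs, h0, sub_zero, sub_zero]; exact div_nonneg hc0 (le_of_lt hc.1)
  have : deriv (deriv f) ξ < 0 := by
    apply hball
    rw [Real.dist_eq, sub_zero, abs_of_pos hξ.1]
    have := hξ.2; have := hc.2; linarith
  linarith

private lemma curve_derivs {n : ℕ} (γ : EuclideanSpace ℝ (Fin n) → EuclideanSpace ℝ (Fin (n + 1)))
    (hγ : ContDiff ℝ 2 γ) (v : EuclideanSpace ℝ (Fin n)) :
    (∀ t : ℝ, HasDerivAt (fun s : ℝ => γ (s • v)) (fderiv ℝ γ (t • v) v) t) ∧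
      HasDerivAt (fun t : ℝ => fderiv ℝ γ (t • v) v) (fderiv ℝ (fderiv ℝ γ) 0 v v) 0 := by
  have hdγ : Differentiable ℝ γ := hγ.differentiable (by norm_num)
  have hc : ∀ t : ℝ, HasDerivAt (fun s : ℝ => s • v) v t := fun t => by
    simpa using (hasDerivAt_id t).smul_const v
  constructor
  · intro t
    exact ((hdγ (t • v)).hasFDerivAt).comp_hasDerivAt t (hc t)
  · have hγ' : ContDiff ℝ 1 (fderiv ℝ γ) := hγ.fderiv_right (by norm_num)
    have h0v : ((0 : ℝ) • v) = 0 := zero_smul ℝ v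
    have h1 : HasDerivAt (fun t : ℝ => fderiv ℝ γ (t • v)) (fderiv ℝ (fderiv ℝ γ) 0 v) 0 := by
      have h' := ((hγ'.differentiable (by norm_num)) ((0 : ℝ) • v)).hasFDerivAt
      have h1 := h'.comp_hasDerivAt 0 (hc 0)
      rw [h0v] at h1
      exact h1
    have := h1.clm_apply (hasDerivAt_const 0 v)
    simpa using this

/-- Two-point second-variation inequality: let `γ₁, γ₂` be `C²` local parametrizations
of two hypersurfaces realizing the minimal distance `d > 0` at `γ₁ 0` and `γ₂ 0`, with
tangent spaces identified (`Dγ₁(0) = Dγ₂(0)`, parallel frames), and let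
`w = (γ₁ 0 − γ₂ 0)/d` be the common unit normal.  Then the second fundamental forms
`h^x(v,v) = −⟨D²γ₁(v,v), w⟩` and `h^y(v,v) = −⟨D²γ₂(v,v), w⟩` with respect to `w`
satisfy `h^x ≤ h^y` as bilinear forms. -/
theorem stmt_8 {n : ℕ}
    (γ₁ γ₂ : EuclideanSpace ℝ (Fin n) → EuclideanSpace ℝ (Fin (n + 1)))
    (hγ₁ : ContDiff ℝ 2 γ₁) (hγ₂ : ContDiff ℝ 2 γ₂)
    (d : ℝ) (hd : 0 < d)
    (hmin : ∀ x y, d ≤ ‖γ₁ x - γ₂ y‖)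
    (heq : ‖γ₁ 0 - γ₂ 0‖ = d)
    (htan : fderiv ℝ γ₁ 0 = fderiv ℝ γ₂ 0) :
    ∀ v : EuclideanSpace ℝ (Fin n),
      -⟪iteratedFDeriv ℝ 2 γ₁ 0 ![v, v], d⁻¹ • (γ₁ 0 - γ₂ 0)⟫ ≤
      -⟪iteratedFDeriv ℝ 2 γ₂ 0 ![v, v], d⁻¹ • (γ₁ 0 - γ₂ 0)⟫ := by
  intro v
  set u : ℝ → EuclideanSpace ℝ (Fin (n + 1)) := fun t => γ₁ (t • v) - γ₂ (t • v) with hu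
  set u' : ℝ → EuclideanSpace ℝ (Fin (n + 1)) :=
    fun t => fderiv ℝ γ₁ (t • v) v - fderiv ℝ γ₂ (t • v) v with hu'
  obtain ⟨h1a, h1b⟩ := curve_derivs γ₁ hγ₁ v
  obtain ⟨h2a, h2b⟩ := curve_derivs γ₂ hγ₂ v
  have hua : ∀ t, HasDerivAt u (u' t) t := fun t => (h1a t).sub (h2a t)
  set B : EuclideanSpace ℝ (Fin (n + 1)) :=
    fderiv ℝ (fderiv ℝ γ₁) 0 v v - fderiv ℝ (fderiv ℝ γ₂) 0 v v with hB
  have hub : HasDerivAt u' B 0 := h1b.sub h2b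
  have hu'0 : u' 0 = 0 := by
    simp [hu', htan]
  set φ : ℝ → ℝ := fun t => ⟪u t, u t⟫ with hφ
  have hφd : ∀ t, HasDerivAt φ (⟪u t, u' t⟫ + ⟪u' t, u t⟫) t := fun t =>
    (hua t).inner ℝ (hua t)
  have hφderiv : deriv φ = fun t => ⟪u t, u' t⟫ + ⟪u' t, u t⟫ :=
    funext fun t => (hφd t).deriv
  have hφ2 : HasDerivAt (deriv φ)
      ((⟪u 0, B⟫ + ⟪u' 0, u' 0⟫) + (⟪u' 0, u' 0⟫ + ⟪B, u 0⟫)) 0 := by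
    rw [hφderiv]
    exact ((hua 0).inner ℝ hub).add (hub.inner ℝ (hua 0))
  have hφC : ContDiff ℝ 2 φ := by
    have hcu : ContDiff ℝ 2 u := by
      have hl : ContDiff ℝ 2 (fun t : ℝ => t • v) :=
        (ContinuousLinearMap.smulRight (1 : ℝ →L[ℝ] ℝ) v).contDiff.of_le le_top |>.of_le le_rfl
      exact ((hγ₁.comp hl).sub (hγ₂.comp hl))
    exact (hcu.inner ℝ hcu)
  have hφmin : ∀ t, φ 0 ≤ φ t := by
    intro t
    simp only [hφ, real_inner_self_eq_norm_sq]
    have h1 : ‖u 0‖ = d := by simpa [hu] using heq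
    have h2 : d ≤ ‖u t‖ := hmin _ _
    nlinarith [norm_nonneg (u t)]
  have hkey : 0 ≤ ⟪u 0, B⟫ + ⟪B, u 0⟫ := by
    have := second_deriv_nonneg_of_min hφC hφmin
    rw [hφ2.deriv] at this
    simpa [hu'0] using this
  have hkey2 : 0 ≤ ⟪u 0, B⟫ := by
    have := real_inner_comm B (u 0); linarith
  rw [iteratedFDeriv_two_apply, iteratedFDeriv_two_apply]
  simp only [Matrix.cons_val_zero, Matrix.cons_val_one, Matrix.head_cons,
    real_inner_smul_right]
  rw [neg_le_neg_iff]
  have hdinv : 0 < d⁻¹ := by positivity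
  apply mul_le_mul_of_nonneg_left _ (le_of_lt hdinv)
  have : u 0 = γ₁ 0 - γ₂ 0 := by simp [hu]
  rw [← this]
  rw [hB, inner_sub_right] at hkey2
  have hc1 := real_inner_comm (fderiv ℝ (fderiv ℝ γ₁) 0 v v) (u 0)
  have hc2 := real_inner_comm (fderiv ℝ (fderiv ℝ γ₂) 0 v v) (u 0)
  linarith
end

section
/- Let X : M → ℝ^{n+1} be a smooth embedding of a compact n-manifold with outward unit normal ν, and define Z(x,y) = 2⟨X(x)−X(y), ν(x)⟩ / ‖X(x)−X(y)‖² for x ≠ y. Then as y → x along a geodesic with initial direction v ∈ TₓM, ‖v‖ = 1, Z(x,y) converges to h_x(v,v), the second fundamental form evaluated at (v,v). -/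
open RealInnerProductSpace

open Filter in
private lemma quad_limit {f f' : ℝ → ℝ} {k : ℝ}
    (hf : ∀ x, HasDerivAt f (f' x) x) (hf0 : f 0 = 0) (hf'0 : f' 0 = 0)
    (hf'' : HasDerivAt f' k 0) :
    Tendsto (fun s : ℝ => f s / s ^ 2) (nhdsWithin 0 {0}ᶜ) (nhds (k / 2)) := by
  have hslope : Tendsto (fun s : ℝ => f' s / s) (nhdsWithin 0 {0}ᶜ) (nhds k) := by
    have := hasDerivAt_iff_tendsto_slope.mp hf''
    refine this.congr' ?_
    filter_upwards [self_mem_nhdsWithin] with s hs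
    simp [slope, hf'0, div_eq_inv_mul]
  apply HasDerivAt.lhopital_zero_nhdsNE (f' := f') (g' := fun s : ℝ => 2 * s)
  · filter_upwards with s using hf s
  · filter_upwards with s
    have : HasDerivAt (fun s : ℝ => s ^ 2) (2 * s ^ 1) s := hasDerivAt_pow 2 s
    simpa using this
  · filter_upwards [self_mem_nhdsWithin] with s hs
    have : s ≠ 0 := hs
    positivity
  · have : Continuous f := Differentiable.continuous fun x => (hf x).differentiableAt
    have h0 : Tendsto f (nhds (0:ℝ)) (nhds (f 0)) := this.tendsto 0
    rw [hf0] at h0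
    exact h0.mono_left nhdsWithin_le_nhds
  · have : Tendsto (fun s : ℝ => s ^ 2) (nhds (0:ℝ)) (nhds ((0:ℝ) ^ 2)) :=
      (continuous_pow 2).tendsto 0
    simpa using this.mono_left nhdsWithin_le_nhds
  · have : (fun s : ℝ => f' s / (2 * s)) = fun s => (f' s / s) / 2 := by
      funext s; rw [div_div]; ring_nf
    rw [this]
    exact hslope.div_const 2

/-- Boundary continuity of `Z`: let `c` be a unit-speed `C²` curve on the hypersurface
through `p = c 0` with initial direction `v = c' 0` tangent to the hypersurface
(`⟨v, ν⟩ = 0`), whose acceleration at `0` is purely normal, `c'' 0 = −h • ν` (the geodesic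
condition, where `h = h_x(v,v)` is the second fundamental form in the direction `v`).
Then `Z(x, c s) = 2⟨p − c s, ν⟩/‖p − c s‖² → h` as `s → 0`, `s ≠ 0`. -/
theorem stmt_9 {n : ℕ} (ν : EuclideanSpace ℝ (Fin (n + 1))) (hν : ‖ν‖ = 1)
    (c : ℝ → EuclideanSpace ℝ (Fin (n + 1))) (hc : ContDiff ℝ 2 c)
    (p : EuclideanSpace ℝ (Fin (n + 1))) (hp : c 0 = p)
    (hunit : ‖deriv c 0‖ = 1) (htan : ⟪deriv c 0, ν⟫ = 0)
    (h : ℝ) (hgeo : deriv (deriv c) 0 = (-h) • ν) :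
    Filter.Tendsto (fun s : ℝ => 2 * ⟪p - c s, ν⟫ / ‖p - c s‖ ^ 2)
      (nhdsWithin 0 {0}ᶜ) (nhds h) := by
  -- basic differentiability facts
  have hc' : ContDiff ℝ 1 (deriv c) := by
    have : ContDiff ℝ (1 + 1) c := by norm_num at hc ⊢; exact hc
    exact (contDiff_succ_iff_deriv.mp this).2.2
  have hcd : Differentiable ℝ c := hc.differentiable (by norm_num)
  have hC : ∀ s, HasDerivAt c (deriv c s) s := fun s => (hcd s).hasDerivAt
  have hC' : ∀ s, HasDerivAt (deriv c) (deriv (deriv c) s) s :=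
    fun s => ((hc'.differentiable one_ne_zero) s).hasDerivAt
  -- first function g
  set g : ℝ → ℝ := fun s => ⟪p - c s, ν⟫ with hg_def
  set G' : ℝ → ℝ := fun s => -⟪deriv c s, ν⟫ with hG'_def
  have hG : ∀ s, HasDerivAt g (G' s) s := by
    intro s
    have := HasDerivAt.inner ℝ ((hasDerivAt_const s p).sub (hC s)) (hasDerivAt_const s ν)
    simpa [G', inner_neg_left] using this
  have hG'' : HasDerivAt G' h 0 := by
    have := (HasDerivAt.inner ℝ (hC' 0) (hasDerivAt_const 0 ν)).neg
    have h2 : -(⟪deriv c 0, (0 : EuclideanSpace ℝ (Fin (n+1)))⟫ + ⟪deriv (deriv c) 0, ν⟫) = h := by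
      rw [inner_zero_right, hgeo, real_inner_smul_left, real_inner_self_eq_norm_sq, hν]
      ring
    rw [h2] at this
    exact this
  have hg0 : g 0 = 0 := by
    show ⟪p - c 0, ν⟫ = 0
    rw [hp, sub_self, inner_zero_left]
  have hG'0 : G' 0 = 0 := by
    show -⟪deriv c 0, ν⟫ = 0
    rw [htan, neg_zero]
  -- second function q
  set q : ℝ → ℝ := fun s => ⟪p - c s, p - c s⟫ with hq_def
  set Q' : ℝ → ℝ := fun s => -(2 * ⟪p - c s, deriv c s⟫) with hQ'_def
  have hQ : ∀ s, HasDerivAt q (Q' s) s := by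
    intro s
    have := HasDerivAt.inner ℝ ((hasDerivAt_const s p).sub (hC s))
      ((hasDerivAt_const s p).sub (hC s))
    simp only [Pi.sub_apply] at this
    have e : ⟪p - c s, 0 - deriv c s⟫ + ⟪0 - deriv c s, p - c s⟫ = Q' s := by
      show _ = -(2 * ⟪p - c s, deriv c s⟫)
      rw [zero_sub, inner_neg_right, inner_neg_left, real_inner_comm (deriv c s)]
      ring
    rw [e] at this
    exact this
  have hQ'' : HasDerivAt Q' 2 0 := by
    have := ((HasDerivAt.inner ℝ ((hasDerivAt_const 0 p).sub (hC 0)) (hC' 0)).const_mul 2).neg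
    simp only [Pi.sub_apply] at this
    have e : -(2 * (⟪p - c 0, deriv (deriv c) 0⟫ + ⟪0 - deriv c 0, deriv c 0⟫)) = 2 := by
      rw [hp, sub_self, inner_zero_left, zero_sub, inner_neg_left,
        real_inner_self_eq_norm_sq, hunit]
      ring
    rw [e] at this
    exact this
  have hq0 : q 0 = 0 := by
    show ⟪p - c 0, p - c 0⟫ = 0
    rw [hp, sub_self, inner_zero_left]
  have hQ'0 : Q' 0 = 0 := by
    show -(2 * ⟪p - c 0, deriv c 0⟫) = 0
    rw [hp, sub_self, inner_zero_left]
    ring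
  -- quadratic limits
  have hgl := quad_limit hG hg0 hG'0 hG''
  have hql := quad_limit hQ hq0 hQ'0 hQ''
  norm_num at hql
  -- combine
  have hmain : Filter.Tendsto (fun s : ℝ => (2 * (g s / s ^ 2)) / (q s / s ^ 2))
      (nhdsWithin 0 {0}ᶜ) (nhds h) := by
    have := ((hgl.const_mul 2).div hql one_ne_zero)
    have h2 : 2 * (h / 2) / 1 = h := by ring
    rw [h2] at this
    exact this
  refine hmain.congr' ?_
  filter_upwards [self_mem_nhdsWithin] with s hs
  have hs2 : (s : ℝ) ^ 2 ≠ 0 := pow_ne_zero 2 hs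
  have : (2 * (g s / s ^ 2)) / (q s / s ^ 2) = 2 * g s / q s := by
    rw [mul_div_assoc', div_div_div_cancel_right₀]
    exact hs2
  rw [this]
  show 2 * ⟪p - c s, ν⟫ / ⟪p - c s, p - c s⟫ = _
  rw [real_inner_self_eq_norm_sq]
end
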